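/- Let M be a smooth manifold, let e₁, e₂ : M → EuclideanSpace ℝ (Fin m) be smooth maps with ‖e₁ x‖ = 1, ‖e₂ x‖ = 1 and ⟪e₁ x, e₂ x⟫ = 0 for all x, and let θ : M → ℝ be smooth, satisfying mfderiv θ x X = ⟪mfderiv e₂ x X, e₁ x⟫ for all x and X. For t ∈ ℝ define φ_t := (cos (θ + t)) • e₁ + (sin (θ + t)) • e₂, and let Π_x denote the orthogonal projection onto the orthogonal complement of the span of e₁ x and e₂ x. Fix x ∈ M and X ∈ T_xM. If there exist t, t' ∈ ℝ with sin (t − t') ≠ 0 such that mfderiv φ_t x X = 0 and mfderiv φ_{t'} x X = 0, then Π_x (mfderiv e₁ x X) = 0 and Π_x (mfderiv e₂ x X) = 0. (Hence each curve of the parallel family φ_t fails to be an immersion in a given direction for at most one value of t modulo π unless the Gauss map is degenerate in that direction.) -/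

import Mathlib

open scoped Manifold InnerProductSpace

/-- `mfderiv` of a map into a normed vector space (model `𝓘(ℝ, F)`), with its codomain
identified with the vector space itself (`TangentSpace 𝓘(ℝ, F) y` is by definition `F`). -/
noncomputable def mfderivE
    {E : Type*} [NormedAddCommGroup E] [NormedSpace ℝ E]
    {H : Type*} [TopologicalSpace H] (I : ModelWithCorners ℝ E H)
    {M : Type*} [TopologicalSpace M] [ChartedSpace H M]
    {F : Type*} [NormedAddCommGroup F] [NormedSpace ℝ F]
    (f : M → F) (x : M) : TangentSpace I x →L[ℝ] F :=
  mfderiv I 𝓘(ℝ, F) f x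

section Aux
variable {E : Type*} [NormedAddCommGroup E] [NormedSpace ℝ E]
    {H : Type*} [TopologicalSpace H] {I : ModelWithCorners ℝ E H}
    {M : Type*} [TopologicalSpace M] [ChartedSpace H M]
    [IsManifold I (⊤ : ℕ∞) M]
    {F₁ F₂ : Type*} [NormedAddCommGroup F₁] [NormedSpace ℝ F₁]
    [NormedAddCommGroup F₂] [NormedSpace ℝ F₂] {x : M}

theorem hasMFDerivAt_prod' {f : M → F₁} {g : M → F₂}
    {f' : TangentSpace I x →L[ℝ] F₁} {g' : TangentSpace I x →L[ℝ] F₂}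
    (hf : HasMFDerivAt I 𝓘(ℝ, F₁) f x f') (hg : HasMFDerivAt I 𝓘(ℝ, F₂) g x g') :
    HasMFDerivAt I 𝓘(ℝ, F₁ × F₂) (fun p => (f p, g p)) x (f'.prod g') := by
  have h1 : MDifferentiableAt I 𝓘(ℝ, F₁ × F₂) (fun p => (f p, g p)) x :=
    hf.mdifferentiableAt.prodMk_space hg.mdifferentiableAt
  have h2 := h1.hasMFDerivAt
  have h3 : mfderiv I 𝓘(ℝ, F₁ × F₂) (fun p => (f p, g p)) x = f'.prod g' := by
    rw [modelWithCornersSelf_prod, ← chartedSpaceSelf_prod]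
    rw [MDifferentiableAt.mfderiv_prod hf.mdifferentiableAt hg.mdifferentiableAt,
      hf.mfderiv, hg.mfderiv]
    rfl
  rwa [h3] at h2

theorem hasMFDerivAt_smul' {f : M → ℝ} {g : M → F₁}
    {f' : TangentSpace I x →L[ℝ] ℝ} {g' : TangentSpace I x →L[ℝ] F₁}
    (hf : HasMFDerivAt I 𝓘(ℝ) f x f') (hg : HasMFDerivAt I 𝓘(ℝ, F₁) g x g') :
    HasMFDerivAt I 𝓘(ℝ, F₁) (fun p => f p • g p) x (f x • g' + f'.smulRight (g x)) := by
  have hb := ((isBoundedBilinearMap_smul (𝕜 := ℝ) (E := F₁)).hasFDerivAt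
    (f x, g x)).hasMFDerivAt
  have := hb.comp x (hasMFDerivAt_prod' hf hg)
  refine this.congr_mfderiv ?_
  ext v
  rfl

end Aux

section Main
variable {E : Type*} [NormedAddCommGroup E] [NormedSpace ℝ E]
    {H : Type*} [TopologicalSpace H] {I : ModelWithCorners ℝ E H}
    {M : Type*} [TopologicalSpace M] [ChartedSpace H M]
    [IsManifold I (⊤ : ℕ∞) M]
    {m : ℕ} {e₁ e₂ : M → EuclideanSpace ℝ (Fin m)} {θ : M → ℝ} {x : M}

-- derivative of φ_t in direction X
theorem phi_deriv
    (he₁ : ContMDiff I 𝓘(ℝ, EuclideanSpace ℝ (Fin m)) (⊤ : ℕ∞) e₁)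
    (he₂ : ContMDiff I 𝓘(ℝ, EuclideanSpace ℝ (Fin m)) (⊤ : ℕ∞) e₂)
    (hθ : ContMDiff I 𝓘(ℝ) (⊤ : ℕ∞) θ) (t : ℝ) (X : TangentSpace I x) :
    mfderivE I (fun p => Real.cos (θ p + t) • e₁ p + Real.sin (θ p + t) • e₂ p) x X
    = (-Real.sin (θ x + t) * (mfderivE I θ x X)) • e₁ x
      + Real.cos (θ x + t) • (mfderivE I e₁ x X)
      + (Real.cos (θ x + t) * (mfderivE I θ x X)) • e₂ x
      + Real.sin (θ x + t) • (mfderivE I e₂ x X) := by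
  have hθx : HasMFDerivAt I 𝓘(ℝ) θ x (mfderiv I 𝓘(ℝ) θ x) :=
    (hθ.mdifferentiable (by simp) x).hasMFDerivAt
  have h1x : HasMFDerivAt I 𝓘(ℝ, EuclideanSpace ℝ (Fin m)) e₁ x
      (mfderiv I 𝓘(ℝ, EuclideanSpace ℝ (Fin m)) e₁ x) :=
    (he₁.mdifferentiable (by simp) x).hasMFDerivAt
  have h2x : HasMFDerivAt I 𝓘(ℝ, EuclideanSpace ℝ (Fin m)) e₂ x
      (mfderiv I 𝓘(ℝ, EuclideanSpace ℝ (Fin m)) e₂ x) :=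
    (he₂.mdifferentiable (by simp) x).hasMFDerivAt
  have hadd : HasMFDerivAt I 𝓘(ℝ) (fun p => θ p + t) x (mfderiv I 𝓘(ℝ) θ x) := by
    have h := hθx.add (hasMFDerivAt_const (I := I) (I' := 𝓘(ℝ)) (c := t) (x := x))
    exact h.congr_mfderiv (add_zero _)
  have hcos := ((Real.hasDerivAt_cos (θ x + t)).hasFDerivAt.hasMFDerivAt).comp x hadd
  have hsin := ((Real.hasDerivAt_sin (θ x + t)).hasFDerivAt.hasMFDerivAt).comp x hadd
  have hA := hasMFDerivAt_smul' hcos h1x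
  have hB := hasMFDerivAt_smul' hsin h2x
  have hsum := hA.add hB
  have hDcoe := hsum.mfderiv
  show (mfderiv I 𝓘(ℝ, EuclideanSpace ℝ (Fin m))
      ((fun p => (Real.cos ∘ fun p => θ p + t) p • e₁ p) +
        fun p => (Real.sin ∘ fun p => θ p + t) p • e₂ p) x) X = _
  rw [hDcoe]
  show Real.cos (θ x + t) • (mfderivE I e₁ x X)
      + ((mfderivE I θ x X) * (-Real.sin (θ x + t))) • e₁ x
      + (Real.sin (θ x + t) • (mfderivE I e₂ x X)
      + ((mfderivE I θ x X) * Real.cos (θ x + t)) • e₂ x) = _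
  module
end Main


/-- In the parallel family `φ_t = cos (θ + t) • e₁ + sin (θ + t) • e₂` associated with a
Lagrangian congruence (`dθ = ⟪de₂, e₁⟫`), if the derivative in a direction `X` vanishes for
two values `t, t'` with `sin (t − t') ≠ 0`, then the projections of `de₁(X)` and `de₂(X)`
onto the orthogonal complement of `span {e₁ x, e₂ x}` both vanish. -/
theorem stmt5
    {E : Type*} [NormedAddCommGroup E] [NormedSpace ℝ E]
    {H : Type*} [TopologicalSpace H] (I : ModelWithCorners ℝ E H)
    {M : Type*} [TopologicalSpace M] [ChartedSpace H M]
    [IsManifold I (⊤ : ℕ∞) M]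
    {m : ℕ} {e₁ e₂ : M → EuclideanSpace ℝ (Fin m)} {θ : M → ℝ}
    (he₁ : ContMDiff I 𝓘(ℝ, EuclideanSpace ℝ (Fin m)) (⊤ : ℕ∞) e₁)
    (he₂ : ContMDiff I 𝓘(ℝ, EuclideanSpace ℝ (Fin m)) (⊤ : ℕ∞) e₂)
    (hθ : ContMDiff I 𝓘(ℝ) (⊤ : ℕ∞) θ)
    (hn₁ : ∀ x : M, ‖e₁ x‖ = 1) (hn₂ : ∀ x : M, ‖e₂ x‖ = 1)
    (horth : ∀ x : M, ⟪e₁ x, e₂ x⟫_ℝ = 0)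
    (hθ' : ∀ x : M, ∀ X : TangentSpace I x,
      mfderivE I θ x X = ⟪mfderivE I e₂ x X, e₁ x⟫_ℝ)
    (φ : ℝ → M → EuclideanSpace ℝ (Fin m))
    (hφdef : ∀ t : ℝ, φ t = fun x =>
      Real.cos (θ x + t) • e₁ x + Real.sin (θ x + t) • e₂ x)
    (x : M) (X : TangentSpace I x) (t t' : ℝ)
    (hsin : Real.sin (t - t') ≠ 0)
    (h₁ : mfderivE I (φ t) x X = 0)
    (h₂ : mfderivE I (φ t') x X = 0) :
    Submodule.orthogonalProjectionOnto (Submodule.span ℝ {e₁ x, e₂ x})ᗮ (mfderivE I e₁ x X) = 0 ∧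
    Submodule.orthogonalProjectionOnto (Submodule.span ℝ {e₁ x, e₂ x})ᗮ (mfderivE I e₂ x X) = 0 := by
  rw [hφdef t] at h₁
  rw [hφdef t'] at h₂
  rw [phi_deriv he₁ he₂ hθ t X] at h₁
  rw [phi_deriv he₁ he₂ hθ t' X] at h₂
  set P := Submodule.orthogonalProjectionOnto (Submodule.span ℝ {e₁ x, e₂ x})ᗮ with hP
  have hP1 : P (e₁ x) = 0 :=
    Submodule.orthogonalProjectionOnto_orthogonal_apply_eq_zero
      (Submodule.subset_span (by simp))
  have hP2 : P (e₂ x) = 0 :=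
    Submodule.orthogonalProjectionOnto_orthogonal_apply_eq_zero
      (Submodule.subset_span (by simp))
  set a := Real.cos (θ x + t)
  set b := Real.sin (θ x + t)
  set a' := Real.cos (θ x + t')
  set b' := Real.sin (θ x + t')
  set v₁ := P (mfderivE I e₁ x X)
  set v₂ := P (mfderivE I e₂ x X)
  have E1 : a • v₁ + b • v₂ = 0 := by
    have h := congrArg P h₁
    simpa [v₁, v₂, map_add, map_smul, hP1, hP2] using h
  have E2 : a' • v₁ + b' • v₂ = 0 := by
    have h := congrArg P h₂
    simpa [v₁, v₂, map_add, map_smul, hP1, hP2] using h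
  have hdet : a * b' - a' * b ≠ 0 := by
    have : a * b' - a' * b = Real.sin (t' - t) := by
      rw [show t' - t = (θ x + t') - (θ x + t) by ring, Real.sin_sub]; ring
    rw [this, show t' - t = -(t - t') by ring, Real.sin_neg]
    simpa using hsin
  constructor
  · have hv : (a * b' - a' * b) • v₁ = 0 := by
      have hcomb : (a * b' - a' * b) • v₁
          = b' • (a • v₁ + b • v₂) - b • (a' • v₁ + b' • v₂) := by module
      rw [hcomb, E1, E2]; simp
    exact (smul_eq_zero.mp hv).resolve_left hdet
  · have hv : (a * b' - a' * b) • v₂ = 0 := by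
      have hcomb : (a * b' - a' * b) • v₂
          = a • (a' • v₁ + b' • v₂) - a' • (a • v₁ + b • v₂) := by module
      rw [hcomb, E1, E2]; simp
    exact (smul_eq_zero.mp hv).resolve_left hdet
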